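/- Let m ≥ 3, 2 ≤ j ≤ m - 1, p prime, and 1 ≤ d ≤ p - 1. Then the polynomial F_5 = (p^m - p) + z ± (p^{1+2m+j} d) z^j - z^m is irreducible in ℤ[z]. -/

import Mathlib

open Polynomial

noncomputable def Complex.abs : AbsoluteValue ℂ ℝ :=
  IsAbsoluteValue.toAbsoluteValue (norm : ℂ → ℝ)

@[simp] lemma Complex.abs_apply (z : ℂ) : Complex.abs z = ‖z‖ := rfl

lemma Complex.norm_eq_abs (z : ℂ) : ‖z‖ = Complex.abs z := rfl

lemma Complex.abs_natCast (n : ℕ) : Complex.abs (n : ℂ) = n := by simp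

lemma Complex.abs_intCast (n : ℤ) : Complex.abs (n : ℂ) = |(n : ℝ)| := by
  simp [Complex.abs_apply, Complex.norm_intCast]

lemma Complex.abs_ofReal (x : ℝ) : Complex.abs (x : ℂ) = |x| := by simp

private lemma ms_one_le_prod (s : Multiset ℝ) (h : ∀ x ∈ s, 1 ≤ x) : 1 ≤ s.prod := by
  induction s using Multiset.induction_on with
  | empty => simp
  | cons a t ih =>
    rw [Multiset.prod_cons]
    have ha := h a (Multiset.mem_cons_self a t)
    have ht := ih fun x hx => h x (Multiset.mem_cons_of_mem hx)
    nlinarith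

private lemma ms_prod_lt_one (s : Multiset ℝ) (hne : s ≠ 0)
    (h : ∀ x ∈ s, 0 ≤ x ∧ x < 1) : s.prod < 1 := by
  induction s using Multiset.induction_on with
  | empty => exact absurd rfl hne
  | cons a t ih =>
    rw [Multiset.prod_cons]
    obtain ⟨ha0, ha1⟩ := h a (Multiset.mem_cons_self a t)
    have ht : ∀ x ∈ t, 0 ≤ x ∧ x < 1 := fun x hx => h x (Multiset.mem_cons_of_mem hx)
    by_cases h0 : t = 0
    · subst h0; simpa using ha1
    · have h1 := ih h0 ht
      have h0t : 0 ≤ t.prod := Multiset.prod_nonneg fun x hx => (ht x hx).1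
      nlinarith

private lemma root_dichotomy (m j : ℕ) (hm : 3 ≤ m) (hj : 2 ≤ j) (hjm : j < m)
    (p : ℕ) (hp2 : 2 ≤ p) (d : ℕ) (hd : 1 ≤ d)
    (ε : ℤ) (hε : ε = 1 ∨ ε = -1) (ρ : ℂ)
    (hroot : ((p:ℂ)^m - (p:ℂ)) + ρ + ((ε:ℂ) * (p:ℂ)^(1+2*m+j) * (d:ℂ)) * ρ^j - ρ^m = 0) :
    Complex.abs ρ < 1 ∨ (p:ℝ)^2 < Complex.abs ρ := by
  by_contra hcon
  push_neg at hcon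
  obtain ⟨hr1, hr2⟩ := hcon
  set r := Complex.abs ρ with hr
  have hP2 : (2:ℝ) ≤ (p:ℝ) := by exact_mod_cast hp2
  set P := (p:ℝ) with hPdef
  have hr0 : 0 ≤ r := Complex.abs.nonneg ρ
  have heq : (ε:ℂ) * (p:ℂ)^(1+2*m+j) * (d:ℂ) * ρ^j
      = ρ^m - ρ - ((p:ℂ)^m - (p:ℂ)) := by linear_combination hroot
  have hε1 : Complex.abs (ε:ℂ) = 1 := by rcases hε with h | h <;> simp [h]
  have habs : P^(1+2*m+j) * (d:ℝ) * r^j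
      = Complex.abs (ρ^m - ρ - ((p:ℂ)^m - (p:ℂ))) := by
    rw [← heq, map_mul, map_mul, map_mul, map_pow, map_pow, hε1,
      Complex.abs_natCast, Complex.abs_natCast]
    ring
  have hc : Complex.abs ((p:ℂ)^m - (p:ℂ)) = P^m - P := by
    have h1 : ((p:ℂ)^m - (p:ℂ)) = ((P^m - P : ℝ) : ℂ) := by simp only [hPdef]; push_cast; ring
    rw [h1, Complex.abs_ofReal, abs_of_nonneg]
    have : P ≤ P^m := le_self_pow₀ (by linarith) (by omega)
    linarith
  have htri : Complex.abs (ρ^m - ρ - ((p:ℂ)^m - (p:ℂ))) ≤ r^m + r + (P^m - P) := by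
    calc Complex.abs (ρ^m - ρ - ((p:ℂ)^m - (p:ℂ)))
        ≤ Complex.abs (ρ^m - ρ) + Complex.abs ((p:ℂ)^m - (p:ℂ)) := by
          rw [sub_eq_add_neg]
          exact (Complex.abs.add_le _ _).trans (by rw [Complex.abs.map_neg])
      _ ≤ (Complex.abs (ρ^m) + Complex.abs ρ) + Complex.abs ((p:ℂ)^m - (p:ℂ)) := by
          have : Complex.abs (ρ^m - ρ) ≤ Complex.abs (ρ^m) + Complex.abs ρ := by
            rw [sub_eq_add_neg]
            exact (Complex.abs.add_le _ _).trans (by rw [Complex.abs.map_neg])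
          linarith
      _ = r^m + r + (P^m - P) := by rw [map_pow, hc]
  have hrj : (1:ℝ) ≤ r ^ j := by
    have := pow_le_pow_left₀ (zero_le_one) hr1 j
    simpa using this
  have hrm : r^m ≤ P^(2*m) := by
    calc r^m ≤ (P^2)^m := pow_le_pow_left₀ hr0 hr2 m
      _ = P^(2*m) := by rw [← pow_mul, Nat.mul_comm]
  have hd1 : (1:ℝ) ≤ (d:ℝ) := by exact_mod_cast hd
  have hPm : P^m ≤ P^(2*m) := pow_le_pow_right₀ (by linarith) (by omega)
  have hP2m : P^2 ≤ P^(2*m) := pow_le_pow_right₀ (by linarith) (by omega)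
  have hK : P^(2*m+3) ≤ P^(1+2*m+j) := pow_le_pow_right₀ (by linarith) (by omega)
  have hKpos : (0:ℝ) < P^(1+2*m+j) := pow_pos (by linarith) _
  have hKl : P^(1+2*m+j) ≤ P^(1+2*m+j) * (d:ℝ) * r^j := by
    have h1 : (1:ℝ) ≤ (d:ℝ) * r^j := by nlinarith
    calc P^(1+2*m+j) = P^(1+2*m+j) * 1 := (mul_one _).symm
      _ ≤ P^(1+2*m+j) * ((d:ℝ) * r^j) :=
          mul_le_mul_of_nonneg_left h1 (le_of_lt hKpos)
      _ = P^(1+2*m+j) * (d:ℝ) * r^j := by ring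
  have hsplit : P^(2*m+3) = P^(2*m) * P^3 := by rw [← pow_add]
  have hppos : (0:ℝ) < P^(2*m) := pow_pos (by linarith) _
  have hP8 : (8:ℝ) ≤ P^3 := by nlinarith
  nlinarith [htri, habs, hrm, hPm, hP2m, hr2, hK, hKl, hsplit, hP8, hP2]

private lemma key_lemma (m j : ℕ) (hm : 3 ≤ m) (hj : 2 ≤ j) (hjm : j ≤ m - 1)
    (p : ℕ) (hp : p.Prime) (d : ℕ) (hd : 1 ≤ d) (hdp : d ≤ p - 1)
    (ε : ℤ) (hε : ε = 1 ∨ ε = -1) (a b : ℤ[X])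
    (hab : C ((p : ℤ) ^ m - p) + X + C (ε * (p : ℤ) ^ (1 + 2 * m + j) * d) * X ^ j - X ^ m
      = a * b)
    (hbdeg : 1 ≤ b.natDegree)
    (hblead : b.leadingCoeff = 1 ∨ b.leadingCoeff = -1)
    (hb0 : ¬ ((p:ℤ) ∣ b.eval 0)) : False := by
  have hp2 : 2 ≤ p := hp.two_le
  have hjm' : j < m := by omega
  have hm0 : m ≠ 0 := by omega
  have hj0 : j ≠ 0 := by omega
  -- evaluations
  have hevq : a.eval (p:ℤ) * b.eval (p:ℤ) = ε * d * (p:ℤ)^(1+2*m+2*j) := by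
    have h1 : eval (p:ℤ) (C ((p : ℤ) ^ m - p) + X
        + C (ε * (p : ℤ) ^ (1 + 2 * m + j) * d) * X ^ j - X ^ m)
        = ε * d * (p:ℤ)^(1+2*m+2*j) := by
      simp only [eval_add, eval_sub, eval_mul, eval_pow, eval_C, eval_X]
      rw [show 1+2*m+2*j = (1+2*m+j)+j by omega, pow_add]
      ring
    rw [← h1, hab, eval_mul]
  have hbq_dvd : b.eval (p:ℤ) ∣ ε * d * (p:ℤ)^(1+2*m+2*j) :=
    ⟨a.eval (p:ℤ), by rw [← hevq]; ring⟩
  have hmodq : (p:ℤ) ∣ b.eval (p:ℤ) - b.eval 0 := by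
    simpa using sub_dvd_eval_sub (p:ℤ) 0 b
  have hbq_ndvd : ¬ (p:ℤ) ∣ b.eval (p:ℤ) := by
    intro h
    exact hb0 (by simpa using dvd_sub h hmodq)
  have hqprime : Prime (p:ℤ) := Nat.prime_iff_prime_int.mp hp
  have hcop : IsCoprime (b.eval (p:ℤ)) ((p:ℤ)^(1+2*m+2*j)) :=
    ((hqprime.coprime_iff_not_dvd.mpr hbq_ndvd).symm).pow_right
  have hdvd_ed : b.eval (p:ℤ) ∣ ε * d := hcop.dvd_of_dvd_mul_right hbq_dvd
  have habs_bq : |b.eval (p:ℤ)| ≤ (d:ℤ) := by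
    have h1 : b.eval (p:ℤ) ∣ (d:ℤ) := by
      rcases hε with h | h <;> subst h
      · simpa using hdvd_ed
      · exact dvd_neg.mp (by simpa using hdvd_ed)
    exact Int.le_of_dvd (by exact_mod_cast hd) ((abs_dvd _ _).mpr h1)
  have hb00 : b.eval 0 ≠ 0 := fun h => hb0 (by rw [h]; exact dvd_zero _)
  -- complex side
  have hinj : Function.Injective (Int.castRingHom ℂ) := Int.cast_injective
  set bC := b.map (Int.castRingHom ℂ) with hbCdef
  have hlead0 : b.leadingCoeff ≠ 0 := by rcases hblead with h | h <;> simp [h]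
  have hbne : b ≠ 0 := fun h => hlead0 (by simp [h])
  have hbCne : bC ≠ 0 := by
    rw [hbCdef, Ne, Polynomial.map_eq_zero_iff hinj]
    exact hbne
  have hsplits : Splits bC := IsAlgClosed.splits bC
  have hfact : bC = C bC.leadingCoeff * (bC.roots.map fun x => X - C x).prod :=
    hsplits.eq_prod_roots
  have hlcabs : Complex.abs bC.leadingCoeff = 1 := by
    rw [hbCdef, leadingCoeff_map_of_injective hinj]
    rcases hblead with h | h <;> simp [h]
  have heval_abs : ∀ x : ℂ, Complex.abs (bC.eval x)
      = (bC.roots.map fun ρ => Complex.abs (x - ρ)).prod := by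
    intro x
    conv_lhs => rw [hfact]
    rw [eval_mul, eval_C, map_mul, hlcabs, one_mul, eval_multiset_prod,
      map_multiset_prod Complex.abs, Multiset.map_map, Multiset.map_map]
    congr 1
    apply Multiset.map_congr rfl
    intro ρ _
    simp
  have hroots_card : Multiset.card bC.roots = b.natDegree := by
    rw [splits_iff_card_roots.mp hsplits, hbCdef, natDegree_map_eq_of_injective hinj]
  have hFroot : ∀ ρ : ℂ, ρ ∈ bC.roots →
      ((p:ℂ)^m - (p:ℂ)) + ρ + ((ε:ℂ) * (p:ℂ)^(1+2*m+j) * (d:ℂ)) * ρ^j - ρ^m = 0 := by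
    intro ρ hρ
    have hbCρ : bC.eval ρ = 0 := ((mem_roots hbCne).mp hρ)
    have hmapF := congrArg (fun g => Polynomial.eval ρ (g.map (Int.castRingHom ℂ))) hab
    simp only [Polynomial.map_mul, eval_mul, ← hbCdef, hbCρ, mul_zero,
      Polynomial.map_add, Polynomial.map_sub, Polynomial.map_pow,
      Polynomial.map_C, Polynomial.map_X, eval_add, eval_sub, eval_pow,
      eval_C, eval_X, map_mul, map_sub, map_pow, map_natCast, map_intCast,
      eq_intCast, Polynomial.map_natCast, Polynomial.map_intCast,
      Polynomial.eval_natCast, Polynomial.eval_intCast] at hmapF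
    linear_combination hmapF
  have hdich : ∀ ρ ∈ bC.roots, Complex.abs ρ < 1 ∨ (p:ℝ)^2 < Complex.abs ρ :=
    fun ρ hρ => root_dichotomy m j hm hj hjm' p hp2 d hd ε hε ρ (hFroot ρ hρ)
  have hP2 : (2:ℝ) ≤ (p:ℝ) := by exact_mod_cast hp2
  have habsP : Complex.abs ((p:ℂ)) = (p:ℝ) := Complex.abs_natCast p
  by_cases hbig : ∃ ρ ∈ bC.roots, (p:ℝ)^2 < Complex.abs ρ
  · -- big root gives |b.eval p| ≥ p^2 - p > d
    obtain ⟨ρ0, hρ0mem, hρ0⟩ := hbig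
    have hbqC : Complex.abs (bC.eval ((p:ℕ):ℂ)) = |((b.eval (p:ℤ) : ℤ) : ℝ)| := by
      have h1 : bC.eval ((p:ℕ):ℂ) = ((b.eval (p:ℤ) : ℤ) : ℂ) := by
        rw [hbCdef, show ((p:ℕ):ℂ) = (((p:ℕ):ℤ):ℂ) by push_cast; rfl]
        exact eval_intCast_map (Int.castRingHom ℂ) b (p:ℤ)
      rw [h1, Complex.abs_intCast]
    set s := bC.roots.map (fun ρ => Complex.abs (((p:ℕ):ℂ) - ρ)) with hs
    have hmemv : Complex.abs (((p:ℕ):ℂ) - ρ0) ∈ s := Multiset.mem_map_of_mem _ hρ0mem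
    have helem : ∀ ρ ∈ bC.roots, 1 ≤ Complex.abs (((p:ℕ):ℂ) - ρ) := by
      intro ρ hρmem
      rcases hdich ρ hρmem with hsm | hbg
      · have h1 : Complex.abs ((p:ℂ)) - Complex.abs ρ ≤ Complex.abs (((p:ℕ):ℂ) - ρ) := by
          simpa [← Complex.norm_eq_abs] using norm_sub_norm_le ((p:ℂ)) ρ
        rw [habsP] at h1
        linarith
      · have h1 : Complex.abs ρ - Complex.abs ((p:ℂ)) ≤ Complex.abs (((p:ℕ):ℂ) - ρ) := by
          simpa [← Complex.norm_eq_abs, norm_sub_rev] using norm_sub_norm_le ρ ((p:ℂ))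
        rw [habsP] at h1
        nlinarith
    have hv0 : (p:ℝ)^2 - (p:ℝ) ≤ Complex.abs (((p:ℕ):ℂ) - ρ0) := by
      have h1 : Complex.abs ρ0 - Complex.abs ((p:ℂ)) ≤ Complex.abs (((p:ℕ):ℂ) - ρ0) := by
        simpa [← Complex.norm_eq_abs, norm_sub_rev] using norm_sub_norm_le ρ0 ((p:ℂ))
      rw [habsP] at h1
      linarith
    have hrest : ∀ x ∈ s.erase (Complex.abs (((p:ℕ):ℂ) - ρ0)), 1 ≤ x := by
      intro x hx
      obtain ⟨ρ, hρmem, rfl⟩ := Multiset.mem_map.mp (Multiset.mem_of_mem_erase hx)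
      exact helem ρ hρmem
    have hprod : (p:ℝ)^2 - (p:ℝ) ≤ s.prod := by
      rw [← Multiset.cons_erase hmemv, Multiset.prod_cons]
      have h1 := ms_one_le_prod _ hrest
      have h2 : (0:ℝ) ≤ Complex.abs (((p:ℕ):ℂ) - ρ0) := Complex.abs.nonneg _
      nlinarith
    have hfin : Complex.abs (bC.eval ((p:ℕ):ℂ)) = s.prod := heval_abs _
    rw [hbqC] at hfin
    have hd_le : (d:ℝ) ≤ (p:ℝ) - 1 := by
      have : d + 1 ≤ p := by omega
      have := (Nat.cast_le (α := ℝ)).mpr this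
      push_cast at this
      linarith
    have habs_le : |((b.eval (p:ℤ) : ℤ) : ℝ)| ≤ (d:ℝ) := by
      rw [← Int.cast_abs]
      exact_mod_cast habs_bq
    nlinarith [hfin, hprod, habs_le, hd_le, hP2]
  · -- all roots small : |b.eval 0| < 1
    push_neg at hbig
    have hsmall : ∀ ρ ∈ bC.roots, Complex.abs ρ < 1 := by
      intro ρ hρ
      rcases hdich ρ hρ with h | h
      · exact h
      · exact absurd h (by simpa using hbig ρ hρ)
    have h0eq : Complex.abs (bC.eval 0) = (bC.roots.map fun ρ => Complex.abs ρ).prod := by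
      rw [heval_abs 0]
      congr 1
      apply Multiset.map_congr rfl
      intro ρ _
      rw [zero_sub, Complex.abs.map_neg]
    have hne : bC.roots.map (fun ρ => Complex.abs ρ) ≠ 0 := by
      intro h
      have := congrArg Multiset.card h
      rw [Multiset.card_map, hroots_card] at this
      simp at this
      omega
    have hlt := ms_prod_lt_one _ hne (by
      intro x hx
      obtain ⟨ρ, hρmem, rfl⟩ := Multiset.mem_map.mp hx
      exact ⟨Complex.abs.nonneg ρ, hsmall ρ hρmem⟩)
    have h0C : bC.eval 0 = ((b.eval 0 : ℤ) : ℂ) := by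
      rw [hbCdef, show (0:ℂ) = (((0:ℤ)):ℂ) by push_cast; rfl]
      simpa using eval_intCast_map (Int.castRingHom ℂ) b 0
    have hge : (1:ℝ) ≤ Complex.abs (bC.eval 0) := by
      rw [h0C, Complex.abs_intCast]
      have h1 : (1:ℤ) ≤ |b.eval 0| := Int.one_le_abs hb00
      rw [← Int.cast_abs]
      exact_mod_cast h1
    rw [h0eq] at hge
    linarith

open Polynomial in
theorem stmt_18 (m j : ℕ) (hm : 3 ≤ m) (hj : 2 ≤ j) (hjm : j ≤ m - 1)
    (p : ℕ) (hp : p.Prime) (d : ℕ) (hd : 1 ≤ d) (hdp : d ≤ p - 1)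
    (ε : ℤ) (hε : ε = 1 ∨ ε = -1) :
    Irreducible
      (C ((p : ℤ) ^ m - p) + X + C (ε * (p : ℤ) ^ (1 + 2 * m + j) * d) * X ^ j
        - X ^ m) := by
  have hp2 : 2 ≤ p := hp.two_le
  have hq2 : (2:ℤ) ≤ (p:ℤ) := by exact_mod_cast hp2
  have hc1 : (C ((p : ℤ) ^ m - p) + X + C (ε * (p : ℤ) ^ (1 + 2 * m + j) * d) * X ^ j
      - X ^ m).coeff 1 = 1 := by
    simp only [coeff_add, coeff_sub, coeff_C_mul, coeff_C, coeff_X_pow, coeff_X_one, coeff_X]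
    split_ifs <;> first | ring1 | (exfalso; first | assumption | omega)
  have hcm : (C ((p : ℤ) ^ m - p) + X + C (ε * (p : ℤ) ^ (1 + 2 * m + j) * d) * X ^ j
      - X ^ m).coeff m = -1 := by
    simp only [coeff_add, coeff_sub, coeff_C_mul, coeff_C, coeff_X_pow, coeff_X_one, coeff_X]
    split_ifs <;> first | ring1 | (exfalso; first | assumption | omega)
  have hdegF : (C ((p : ℤ) ^ m - p) + X + C (ε * (p : ℤ) ^ (1 + 2 * m + j) * d) * X ^ j
      - X ^ m).natDegree = m := by
    apply le_antisymm
    · compute_degree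
      simp only [sup_le_iff]
      omega
    · exact le_natDegree_of_ne_zero (by rw [hcm]; norm_num)
  have hleadF : (C ((p : ℤ) ^ m - p) + X + C (ε * (p : ℤ) ^ (1 + 2 * m + j) * d) * X ^ j
      - X ^ m).leadingCoeff = -1 := by
    rw [← coeff_natDegree, hdegF, hcm]
  constructor
  · intro hu
    have h2 := natDegree_eq_zero_of_isUnit hu
    rw [eq_C_of_natDegree_eq_zero h2, coeff_C] at hc1
    simp at hc1
  · intro a b hab
    by_contra hcon
    push_neg at hcon
    obtain ⟨hua, hub⟩ := hcon
    -- degrees at least 1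
    have hdeg : ∀ u v : ℤ[X],
        (C ((p : ℤ) ^ m - p) + X + C (ε * (p : ℤ) ^ (1 + 2 * m + j) * d) * X ^ j - X ^ m)
          = u * v → ¬ IsUnit u → 1 ≤ u.natDegree := by
      intro u v huv hu
      by_contra hdu
      push_neg at hdu
      have hu0 : u.natDegree = 0 := by omega
      have hCu := eq_C_of_natDegree_eq_zero hu0
      rw [huv, hCu, coeff_C_mul] at hc1
      exact hu (hCu ▸ isUnit_C.mpr (IsUnit.of_mul_eq_one _ hc1))
    have hda : 1 ≤ a.natDegree := hdeg a b hab hua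
    have hdb : 1 ≤ b.natDegree := hdeg b a (by rw [hab, mul_comm]) hub
    -- leading coefficients
    have hlab : a.leadingCoeff * b.leadingCoeff = -1 := by
      rw [← leadingCoeff_mul, ← hab, hleadF]
    have hunit : IsUnit (a.leadingCoeff * b.leadingCoeff) := by
      rw [hlab]; exact isUnit_one.neg
    have hal : a.leadingCoeff = 1 ∨ a.leadingCoeff = -1 :=
      Int.isUnit_iff.mp (isUnit_of_mul_isUnit_left hunit)
    have hbl : b.leadingCoeff = 1 ∨ b.leadingCoeff = -1 :=
      Int.isUnit_iff.mp (isUnit_of_mul_isUnit_right hunit)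
    -- evaluation at zero
    have hev0 : a.eval 0 * b.eval 0 = (p:ℤ)^m - p := by
      have h0 : eval 0 (C ((p : ℤ) ^ m - p) + X
          + C (ε * (p : ℤ) ^ (1 + 2 * m + j) * d) * X ^ j - X ^ m) = (p:ℤ)^m - p := by
        simp [zero_pow (show m ≠ 0 by omega), zero_pow (show j ≠ 0 by omega)]
      rw [← h0, hab, eval_mul]
    have hnd : ¬ ((p:ℤ) ∣ a.eval 0 ∧ (p:ℤ) ∣ b.eval 0) := by
      rintro ⟨⟨a', ha'⟩, ⟨b', hb'⟩⟩
      have hfac : (p:ℤ)^m - p = (p:ℤ) * ((p:ℤ)^(m-1) - 1) := by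
        have hpm : (p:ℤ) ^ m = (p:ℤ) * (p:ℤ)^(m-1) := by
          rw [← pow_succ']
          congr 1
          omega
        rw [mul_sub, mul_one, ← hpm]
      have hdd : (p:ℤ) * (p:ℤ) ∣ (p:ℤ) * ((p:ℤ)^(m-1) - 1) := by
        rw [← hfac, ← hev0, ha', hb']
        exact ⟨a' * b', by ring⟩
      have hdvd1 : (p:ℤ) ∣ (p:ℤ)^(m-1) - 1 :=
        (mul_dvd_mul_iff_left (show (p:ℤ) ≠ 0 by omega)).mp hdd
      have hdvd2 : (p:ℤ) ∣ (p:ℤ)^(m-1) := dvd_pow_self _ (show m - 1 ≠ 0 by omega)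
      have hdvd3 : (p:ℤ) ∣ 1 := by
        have := dvd_sub hdvd2 hdvd1
        simpa using this
      have := Int.le_of_dvd one_pos hdvd3
      omega
    rw [not_and_or] at hnd
    rcases hnd with ha0 | hb0
    · exact key_lemma m j hm hj hjm p hp d hd hdp ε hε b a (by rw [hab, mul_comm]) hda hal ha0
    · exact key_lemma m j hm hj hjm p hp d hd hdp ε hε a b hab hdb hbl hb0
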